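/- Let (μ, ω, λ) and (μ̃, ω̃, λ̃) be univariate skew normal parameters (ω, ω̃ > 0), with Δ = ω·λ/√(1+λ²), Γ = ω²/(1+λ²), and analogously Δ̃, Γ̃. Let CF and C̃F denote the corresponding skew normal characteristic functions CF(t) = exp(iμt − t²ω²/2)·(1 + i·ℑ(Δt)) and C̃F(t) = exp(iμ̃t − t²ω̃²/2)·(1 + i·ℑ(Δ̃t)). If Γ − Γ̃ > 0, then for every t ∈ ℝ with t ≠ 0, lim_{c→∞} CF(ct)/C̃F(ct) = 0. -/

import Mathlib

open Filter

noncomputable section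

/-- ℑ(x) = ∫₀ˣ √(2/π)·exp(u²/2) du. -/
def ImInt (x : ℝ) : ℝ := ∫ u in (0:ℝ)..x, Real.sqrt (2 / Real.pi) * Real.exp (u ^ 2 / 2)

lemma ImInt_neg (x : ℝ) : ImInt (-x) = - ImInt x := by
  unfold ImInt
  have h1 : (∫ u in (0:ℝ)..(-x), Real.sqrt (2 / Real.pi) * Real.exp (u ^ 2 / 2))
      = ∫ u in (0:ℝ)..(-x), Real.sqrt (2 / Real.pi) * Real.exp ((-u) ^ 2 / 2) := by
    simp [neg_sq]
  rw [h1, intervalIntegral.integral_comp_neg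
    (fun u => Real.sqrt (2 / Real.pi) * Real.exp (u ^ 2 / 2)), neg_zero, neg_neg,
    intervalIntegral.integral_symm]

lemma ImInt_upper {x : ℝ} (hx : 0 ≤ x) :
    ImInt x ≤ Real.sqrt (2 / Real.pi) * (x * Real.exp (x ^ 2 / 2)) := by
  unfold ImInt
  have h : ∀ u ∈ Set.Icc (0:ℝ) x, Real.sqrt (2 / Real.pi) * Real.exp (u ^ 2 / 2)
      ≤ Real.sqrt (2 / Real.pi) * Real.exp (x ^ 2 / 2) := by
    intro u hu
    have : u ^ 2 ≤ x ^ 2 := by nlinarith [hu.1, hu.2]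
    gcongr
  calc (∫ u in (0:ℝ)..x, Real.sqrt (2 / Real.pi) * Real.exp (u ^ 2 / 2))
      ≤ ∫ _ in (0:ℝ)..x, Real.sqrt (2 / Real.pi) * Real.exp (x ^ 2 / 2) := by
        apply intervalIntegral.integral_mono_on hx
        · apply Continuous.intervalIntegrable; continuity
        · apply intervalIntegrable_const
        · exact h
    _ = Real.sqrt (2 / Real.pi) * (x * Real.exp (x ^ 2 / 2)) := by
        rw [intervalIntegral.integral_const, smul_eq_mul]; ring

lemma ImInt_nonneg {x : ℝ} (hx : 0 ≤ x) : 0 ≤ ImInt x := by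
  unfold ImInt
  apply intervalIntegral.integral_nonneg hx
  intro u _
  positivity

lemma integral_mul_exp (x : ℝ) :
    (∫ u in (0:ℝ)..x, u * Real.exp (u ^ 2 / 2)) = Real.exp (x ^ 2 / 2) - 1 := by
  have h : ∀ u ∈ Set.uIcc (0:ℝ) x,
      HasDerivAt (fun v : ℝ => Real.exp (v ^ 2 / 2)) (u * Real.exp (u ^ 2 / 2)) u := by
    intro u _
    have h1 : HasDerivAt (fun v : ℝ => v ^ 2 / 2) u u := by
      simpa using (hasDerivAt_pow 2 u).div_const 2
    simpa [mul_comm] using h1.exp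
  rw [intervalIntegral.integral_eq_sub_of_hasDerivAt h
    (by apply Continuous.intervalIntegrable; continuity)]
  simp

lemma ImInt_lower {x : ℝ} (hx : 0 ≤ x) :
    Real.sqrt (2 / Real.pi) * (Real.exp (x ^ 2 / 2) - 1) ≤ x * ImInt x := by
  have key : Real.exp (x ^ 2 / 2) - 1 ≤ x * ∫ u in (0:ℝ)..x, Real.exp (u ^ 2 / 2) := by
    rw [← integral_mul_exp x, ← intervalIntegral.integral_const_mul]
    apply intervalIntegral.integral_mono_on hx
    · apply Continuous.intervalIntegrable; continuity
    · apply Continuous.intervalIntegrable; continuity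
    · intro u hu
      have := Real.exp_pos (u ^ 2 / 2)
      nlinarith [hu.1, hu.2]
  have hq : (0:ℝ) ≤ Real.sqrt (2 / Real.pi) := Real.sqrt_nonneg _
  have h2 : ImInt x = Real.sqrt (2 / Real.pi) * ∫ u in (0:ℝ)..x, Real.exp (u ^ 2 / 2) := by
    unfold ImInt; rw [← intervalIntegral.integral_const_mul]
  rw [h2]
  calc Real.sqrt (2 / Real.pi) * (Real.exp (x ^ 2 / 2) - 1)
      ≤ Real.sqrt (2 / Real.pi) * (x * ∫ u in (0:ℝ)..x, Real.exp (u ^ 2 / 2)) := by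
        apply mul_le_mul_of_nonneg_left key hq
    _ = x * (Real.sqrt (2 / Real.pi) * ∫ u in (0:ℝ)..x, Real.exp (u ^ 2 / 2)) := by ring

def snCF (μ ω lam : ℝ) (t : ℝ) : ℂ :=
  Complex.exp (Complex.I * (μ : ℂ) * (t : ℂ) - ((t ^ 2 * ω ^ 2 / 2 : ℝ) : ℂ)) *
    (1 + Complex.I * ((ImInt (ω * lam / Real.sqrt (1 + lam ^ 2) * t) : ℝ) : ℂ))

lemma norm_snCF (μ ω lam t : ℝ) :
    ‖snCF μ ω lam t‖ = Real.exp (-(t ^ 2 * ω ^ 2 / 2)) *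
      Real.sqrt (1 + (ImInt (ω * lam / Real.sqrt (1 + lam ^ 2) * t)) ^ 2) := by
  unfold snCF
  rw [norm_mul, Complex.norm_exp]
  congr 1
  · congr 1
    rw [show Complex.I * (μ:ℂ) * (t:ℂ) - ((t ^ 2 * ω ^ 2 / 2 : ℝ) : ℂ)
        = ((-(t ^ 2 * ω ^ 2 / 2) : ℝ) : ℂ) + ((μ * t : ℝ) : ℂ) * Complex.I by push_cast; ring]
    simp [pow_two]
  · have : (1 : ℂ) + Complex.I * ((ImInt (ω * lam / Real.sqrt (1 + lam ^ 2) * t) : ℝ) : ℂ)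
        = ((1:ℝ) : ℂ) + ((ImInt (ω * lam / Real.sqrt (1 + lam ^ 2) * t) : ℝ) : ℂ) * Complex.I := by
      push_cast; ring
    rw [this, Complex.norm_add_mul_I]
    norm_num

lemma tendsto_poly_exp (k : ℕ) {ε : ℝ} (hε : 0 < ε) :
    Tendsto (fun c : ℝ => c ^ k * Real.exp (-(ε * c ^ 2))) atTop (nhds 0) := by
  have h1 : Tendsto (fun y : ℝ => y ^ k * Real.exp (-y)) atTop (nhds 0) :=
    Real.tendsto_pow_mul_exp_neg_atTop_nhds_zero k
  have h2 : Tendsto (fun c : ℝ => ε * c ^ 2) atTop atTop := by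
    apply Tendsto.const_mul_atTop hε
    exact tendsto_pow_atTop (by norm_num)
  have h3 : Tendsto (fun c : ℝ => (ε * c ^ 2) ^ k * Real.exp (-(ε * c ^ 2))) atTop (nhds 0) :=
    h1.comp h2
  have h4 : Tendsto (fun c : ℝ => (ε ^ k)⁻¹ * ((ε * c ^ 2) ^ k * Real.exp (-(ε * c ^ 2))))
      atTop (nhds 0) := by simpa using h3.const_mul ((ε ^ k)⁻¹)
  -- c^k * exp(-(ε c^2)) ≤ the above for c ≥ 1, and ≥ 0
  apply squeeze_zero' (g := fun c : ℝ => (ε ^ k)⁻¹ * ((ε * c ^ 2) ^ k * Real.exp (-(ε * c ^ 2))))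
  · filter_upwards [eventually_ge_atTop (0:ℝ)] with c hc
    positivity
  · filter_upwards [eventually_ge_atTop (1:ℝ)] with c hc
    have h5 : c ^ k ≤ (c ^ 2) ^ k := by
      apply pow_le_pow_left₀ (by linarith)
      nlinarith
    have : (ε ^ k)⁻¹ * ((ε * c ^ 2) ^ k * Real.exp (-(ε * c ^ 2)))
        = (c ^ 2) ^ k * Real.exp (-(ε * c ^ 2)) := by
      rw [mul_pow]; field_simp
    rw [this]
    apply mul_le_mul_of_nonneg_right h5 (Real.exp_pos _).le
  · exact h4

lemma abs_ImInt (x : ℝ) : |ImInt x| = ImInt |x| := by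
  rcases le_or_gt 0 x with h | h
  · rw [abs_of_nonneg h, abs_of_nonneg (ImInt_nonneg h)]
  · have h1 : ImInt x = -ImInt (-x) := by rw [← ImInt_neg, neg_neg]
    rw [h1, abs_neg, abs_of_nonneg (ImInt_nonneg (by linarith)), abs_of_neg h]

set_option maxHeartbeats 2000000 in
theorem stmt9 (μ ω lam μ' ω' lam' : ℝ) (hω : 0 < ω) (hω' : 0 < ω')
    (hΓ : 0 < ω ^ 2 / (1 + lam ^ 2) - ω' ^ 2 / (1 + lam' ^ 2)) :
    ∀ t : ℝ, t ≠ 0 →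
      Tendsto (fun c : ℝ => snCF μ ω lam (c * t) / snCF μ' ω' lam' (c * t))
        atTop (nhds 0) := by
  intro t ht
  have hs : (0:ℝ) < t ^ 2 := by positivity
  have h1 : (0:ℝ) < 1 + lam ^ 2 := by positivity
  have h1' : (0:ℝ) < 1 + lam' ^ 2 := by positivity
  rw [tendsto_zero_iff_norm_tendsto_zero]
  simp only [norm_div, norm_snCF]
  set q := Real.sqrt (2 / Real.pi) with hq
  have hqpos : 0 < q := Real.sqrt_pos.mpr (by positivity)
  set Δ := ω * lam / Real.sqrt (1 + lam ^ 2) with hΔ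
  set Δ' := ω' * lam' / Real.sqrt (1 + lam' ^ 2) with hΔ'
  have hΔsq : Δ ^ 2 = ω ^ 2 - ω ^ 2 / (1 + lam ^ 2) := by
    rw [hΔ, div_pow, Real.sq_sqrt h1.le, mul_pow]; field_simp; ring
  have hΔ'sq : Δ' ^ 2 = ω' ^ 2 - ω' ^ 2 / (1 + lam' ^ 2) := by
    rw [hΔ', div_pow, Real.sq_sqrt h1'.le, mul_pow]; field_simp; ring
  set K := q * |Δ * t| with hK
  have hK0 : (0:ℝ) ≤ K := by positivity
  set γ := (ω ^ 2 - ω ^ 2 / (1 + lam ^ 2)) * t ^ 2 / 2 with hγ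
  have hγ0 : (0:ℝ) ≤ γ := by
    have h2 := sq_nonneg Δ
    rw [hΔsq] at h2
    rw [hγ]; positivity
  set ε := (ω ^ 2 / (1 + lam ^ 2) - ω' ^ 2 / (1 + lam' ^ 2)) * t ^ 2 / 2 with hε
  have hεpos : 0 < ε := by
    rw [hε]
    have : (0:ℝ) < t ^ 2 / 2 := by positivity
    calc (0:ℝ) < (ω ^ 2 / (1 + lam ^ 2) - ω' ^ 2 / (1 + lam' ^ 2)) * (t ^ 2 / 2) :=
          mul_pos hΓ this
      _ = (ω ^ 2 / (1 + lam ^ 2) - ω' ^ 2 / (1 + lam' ^ 2)) * t ^ 2 / 2 := by ring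
  -- numerator bound
  have Sbound : ∀ c : ℝ, 1 ≤ c →
      Real.sqrt (1 + ImInt (Δ * (c * t)) ^ 2) ≤ (1 + K) * (c * Real.exp (γ * c ^ 2)) := by
    intro c hc
    have hc0 : (0:ℝ) < c := lt_of_lt_of_le one_pos hc
    set g := ImInt (Δ * (c * t)) with hg
    have h3 : |Δ * (c * t)| = |Δ * t| * c := by
      rw [abs_mul, abs_mul, abs_mul, abs_of_pos hc0]; ring
    have h4 : |Δ * (c * t)| ^ 2 / 2 = γ * c ^ 2 := by
      rw [sq_abs, hγ, ← hΔsq]; ring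
    have h2 : ImInt (|Δ * t| * c) ≤ q * (|Δ * t| * c * Real.exp (γ * c ^ 2)) := by
      have h5 := ImInt_upper (abs_nonneg (Δ * (c * t)))
      rw [h4, h3, ← hq] at h5
      exact h5
    have he1 : (1:ℝ) ≤ c * Real.exp (γ * c ^ 2) := by
      have : (1:ℝ) ≤ Real.exp (γ * c ^ 2) := Real.one_le_exp (by positivity)
      nlinarith
    calc Real.sqrt (1 + g ^ 2) ≤ Real.sqrt ((1 + |g|) ^ 2) := by
          apply Real.sqrt_le_sqrt
          nlinarith [abs_nonneg g, sq_abs g]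
      _ = 1 + |g| := Real.sqrt_sq (by positivity)
      _ ≤ 1 + q * (|Δ * t| * c * Real.exp (γ * c ^ 2)) := by
          rw [hg, abs_ImInt, h3]; linarith [h2]
      _ = 1 + K * (c * Real.exp (γ * c ^ 2)) := by rw [hK]; ring
      _ ≤ (1 + K) * (c * Real.exp (γ * c ^ 2)) := by
          rw [add_mul, one_mul]
          have h8 := mul_le_mul_of_nonneg_left he1 hK0
          linarith
  have Gpos : ∀ c : ℝ, 0 < Real.exp (-((c * t) ^ 2 * ω' ^ 2 / 2)) *
      Real.sqrt (1 + ImInt (Δ' * (c * t)) ^ 2) := by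
    intro c
    have : (0:ℝ) < 1 + ImInt (Δ' * (c * t)) ^ 2 := by positivity
    positivity
  by_cases hl : lam' = 0
  · -- case A : denominator skewness vanishes
    have hΔ'0 : Δ' = 0 := by rw [hΔ', hl]; simp
    have hΓ'eq : ω' ^ 2 / (1 + lam' ^ 2) = ω' ^ 2 := by rw [hl]; norm_num
    have hI0 : ∀ c : ℝ, ImInt (Δ' * (c * t)) = 0 := by
      intro c; rw [hΔ'0]; simp [ImInt]
    apply squeeze_zero' (g := fun c : ℝ => (1 + K) * (c ^ 1 * Real.exp (-(ε * c ^ 2))))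
    · filter_upwards [eventually_ge_atTop (0:ℝ)] with c _
      have h5 : (0:ℝ) < 1 + ImInt (Δ' * (c * t)) ^ 2 := by positivity
      have h6 : (0:ℝ) < 1 + ImInt (Δ * (c * t)) ^ 2 := by positivity
      positivity
    · filter_upwards [eventually_ge_atTop (1:ℝ)] with c hc
      have hc0 : (0:ℝ) < c := lt_of_lt_of_le one_pos hc
      rw [div_le_iff₀ (Gpos c)]
      have hexpA : Real.exp (-((c * t) ^ 2 * ω ^ 2 / 2)) * Real.exp (γ * c ^ 2)
          = Real.exp (-(ε * c ^ 2)) * Real.exp (-((c * t) ^ 2 * ω' ^ 2 / 2)) := by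
        rw [← Real.exp_add, ← Real.exp_add]
        congr 1
        rw [hγ, hε, hΓ'eq]; ring
      calc Real.exp (-((c * t) ^ 2 * ω ^ 2 / 2)) * Real.sqrt (1 + ImInt (Δ * (c * t)) ^ 2)
          ≤ Real.exp (-((c * t) ^ 2 * ω ^ 2 / 2)) * ((1 + K) * (c * Real.exp (γ * c ^ 2))) :=
            mul_le_mul_of_nonneg_left (Sbound c hc) (Real.exp_pos _).le
        _ = (1 + K) * c * (Real.exp (-((c * t) ^ 2 * ω ^ 2 / 2)) * Real.exp (γ * c ^ 2)) := by
            ring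
        _ = (1 + K) * (c ^ 1 * Real.exp (-(ε * c ^ 2))) *
            (Real.exp (-((c * t) ^ 2 * ω' ^ 2 / 2)) *
              Real.sqrt (1 + ImInt (Δ' * (c * t)) ^ 2)) := by
            rw [hexpA, hI0 c]
            norm_num
            ring
    · simpa using (tendsto_poly_exp 1 hεpos).const_mul (1 + K)
  · -- case B : lam' ≠ 0
    have hΔ'ne : Δ' ≠ 0 := by
      rw [hΔ']
      apply div_ne_zero (mul_ne_zero (ne_of_gt hω') hl)
      exact ne_of_gt (Real.sqrt_pos.mpr h1')
    set P := |Δ' * t| with hP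
    have hPpos : 0 < P := abs_pos.mpr (mul_ne_zero hΔ'ne ht)
    have hΔ'sqpos : 0 < Δ' ^ 2 := by
      rcases (sq_nonneg Δ').lt_or_eq with h | h
      · exact h
      · exact absurd (pow_eq_zero_iff (n := 2) (by norm_num) |>.mp h.symm) hΔ'ne
    set α := (ω' ^ 2 - ω' ^ 2 / (1 + lam' ^ 2)) * t ^ 2 / 2 with hα
    have hαpos : 0 < α := by
      rw [hα, ← hΔ'sq]
      positivity
    set Cst := (1 + K) * (2 * P) / q with hCst
    have hCstpos : 0 < Cst := by positivity
    -- denominator lower bound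
    have Dlb : ∀ c : ℝ, max 1 (Real.sqrt (1 / α)) ≤ c →
        q * Real.exp (α * c ^ 2) / (2 * (P * c)) ≤
          Real.sqrt (1 + ImInt (Δ' * (c * t)) ^ 2) := by
      intro c hc
      have hc1 : (1:ℝ) ≤ c := le_trans (le_max_left _ _) hc
      have hc0 : (0:ℝ) < c := lt_of_lt_of_le one_pos hc1
      have hcs : 1 / α ≤ c ^ 2 := by
        have h5 : Real.sqrt (1 / α) ≤ c := le_trans (le_max_right _ _) hc
        nlinarith [Real.sq_sqrt (show (0:ℝ) ≤ 1 / α by positivity),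
          Real.sqrt_nonneg (1 / α)]
      have hac : 1 ≤ α * c ^ 2 := by
        rw [div_le_iff₀ hαpos] at hcs
        nlinarith
      have hexp2 : (2:ℝ) ≤ Real.exp (α * c ^ 2) := by
        have h5 : (2:ℝ) ≤ Real.exp 1 := by
          have := Real.add_one_le_exp 1; linarith
        exact le_trans h5 (Real.exp_le_exp.mpr hac)
      have h3 : |Δ' * (c * t)| = P * c := by
        rw [hP, abs_mul, abs_mul, abs_mul, abs_of_pos hc0]; ring
      have h4 : |Δ' * (c * t)| ^ 2 / 2 = α * c ^ 2 := by
        rw [sq_abs, hα, ← hΔ'sq]; ring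
      have key1 : q * (Real.exp (α * c ^ 2) - 1) ≤ P * c * ImInt (P * c) := by
        have := ImInt_lower (abs_nonneg (Δ' * (c * t)))
        rw [h4, h3] at this
        exact this
      have key2 : q * Real.exp (α * c ^ 2) / (2 * (P * c)) ≤ ImInt (P * c) := by
        rw [div_le_iff₀ (by positivity)]
        nlinarith [hexp2, hqpos]
      calc q * Real.exp (α * c ^ 2) / (2 * (P * c)) ≤ ImInt (P * c) := key2
        _ = |ImInt (Δ' * (c * t))| := by rw [abs_ImInt, h3]
        _ ≤ Real.sqrt (1 + ImInt (Δ' * (c * t)) ^ 2) := by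
            rw [← Real.sqrt_sq_eq_abs]
            apply Real.sqrt_le_sqrt
            linarith
    apply squeeze_zero' (g := fun c : ℝ => Cst * (c ^ 2 * Real.exp (-(ε * c ^ 2))))
    · filter_upwards [eventually_ge_atTop (0:ℝ)] with c _
      have h5 : (0:ℝ) < 1 + ImInt (Δ' * (c * t)) ^ 2 := by positivity
      have h6 : (0:ℝ) < 1 + ImInt (Δ * (c * t)) ^ 2 := by positivity
      positivity
    · filter_upwards [eventually_ge_atTop (max 1 (Real.sqrt (1 / α)))] with c hc
      have hc1 : (1:ℝ) ≤ c := le_trans (le_max_left _ _) hc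
      have hc0 : (0:ℝ) < c := lt_of_lt_of_le one_pos hc1
      rw [div_le_iff₀ (Gpos c)]
      have hexpB : Real.exp (-((c * t) ^ 2 * ω ^ 2 / 2)) * Real.exp (γ * c ^ 2)
          = Real.exp (-(ε * c ^ 2)) *
            (Real.exp (-((c * t) ^ 2 * ω' ^ 2 / 2)) * Real.exp (α * c ^ 2)) := by
        rw [← Real.exp_add, ← Real.exp_add, ← Real.exp_add]
        congr 1
        rw [hγ, hε, hα]; ring
      calc Real.exp (-((c * t) ^ 2 * ω ^ 2 / 2)) * Real.sqrt (1 + ImInt (Δ * (c * t)) ^ 2)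
          ≤ Real.exp (-((c * t) ^ 2 * ω ^ 2 / 2)) * ((1 + K) * (c * Real.exp (γ * c ^ 2))) :=
            mul_le_mul_of_nonneg_left (Sbound c hc1) (Real.exp_pos _).le
        _ = (1 + K) * c *
            (Real.exp (-(ε * c ^ 2)) *
              (Real.exp (-((c * t) ^ 2 * ω' ^ 2 / 2)) * Real.exp (α * c ^ 2))) := by
            rw [← hexpB]; ring
        _ = Cst * (c ^ 2 * Real.exp (-(ε * c ^ 2))) *
            (Real.exp (-((c * t) ^ 2 * ω' ^ 2 / 2)) *
              (q * Real.exp (α * c ^ 2) / (2 * (P * c)))) := by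
            rw [hCst]
            field_simp
        _ ≤ Cst * (c ^ 2 * Real.exp (-(ε * c ^ 2))) *
            (Real.exp (-((c * t) ^ 2 * ω' ^ 2 / 2)) *
              Real.sqrt (1 + ImInt (Δ' * (c * t)) ^ 2)) := by
            apply mul_le_mul_of_nonneg_left _ (by positivity)
            exact mul_le_mul_of_nonneg_left (Dlb c hc) (Real.exp_pos _).le
    · simpa using (tendsto_poly_exp 2 hεpos).const_mul Cst
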